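/- If the set U of unattacked arguments of an argumentation framework is a stable extension, then U equals the grounded extension and U is the unique complete extension. -/
import Mathlib


def attacked {A : Type*} (R : A → A → Prop) (S : Set A) : Set A :=
  {b | ∃ a ∈ S, R a b}

def neutrality {A : Type*} (R : A → A → Prop) (S : Set A) : Set A :=
  (attacked R S)ᶜ

def defence {A : Type*} (R : A → A → Prop) (S : Set A) : Set A :=
  {a | ∀ b, R b a → b ∈ attacked R S}

def unattacked {A : Type*} (R : A → A → Prop) : Set A :=
  {a | ∀ b, ¬ R b a}

def conflictFree {A : Type*} (R : A → A → Prop) (S : Set A) : Prop :=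
  S ⊆ neutrality R S

def complete {A : Type*} (R : A → A → Prop) (S : Set A) : Prop :=
  conflictFree R S ∧ S ⊆ defence R S ∧ defence R S ⊆ S

def subsolution {A : Type*} (R : A → A → Prop) (S : Set A) : Prop :=
  S ⊆ neutrality R S ∧ S = neutrality R (neutrality R S)

def stableExt {A : Type*} (R : A → A → Prop) (S : Set A) : Prop :=
  S = neutrality R S

def preferred {A : Type*} (R : A → A → Prop) (S : Set A) : Prop :=
  complete R S ∧ ∀ T, complete R T → S ⊆ T → S = T

/-- If the set of unattacked arguments is a stable extension, then it is the grounded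
extension and the unique complete extension. -/
theorem unattacked_stable_is_grounded {A : Type*} (R : A → A → Prop)
    (h : stableExt R (unattacked R)) :
    complete R (unattacked R) ∧ (∀ T, complete R T → unattacked R ⊆ T) ∧
    (∀ T, complete R T → T = unattacked R) := by
  have key : ∀ a, a ∉ unattacked R → a ∈ attacked R (unattacked R) := by
    intro a ha
    by_contra hc
    exact ha (h ▸ hc)
  have hU : complete R (unattacked R) := by
    refine ⟨?_, ?_, ?_⟩
    · intro a ha; rw [← h]; exact ha
    · intro a ha b hb; exact absurd hb (ha b)
    · intro a ha
      by_contra hna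
      obtain ⟨u, hu, hua⟩ := key a hna
      obtain ⟨w, hw, hwu⟩ := ha u hua
      exact hu w hwu
  refine ⟨hU, ?_, ?_⟩
  · intro T hT a ha
    exact hT.2.2 (fun b hb => absurd hb (ha b))
  · intro T hT
    apply Set.Subset.antisymm
    · intro t ht
      intro b hb
      have hnt : t ∉ unattacked R := fun htu => htu b hb
      obtain ⟨u, hu, hut⟩ := key t hnt
      have huT : u ∈ T := hT.2.2 (fun c hc => absurd hc (hu c))
      exact hT.1 ht ⟨u, huT, hut⟩
    · intro a ha
      exact hT.2.2 (fun b hb => absurd hb (ha b))
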